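/- Let P = ⟨x⟩ be a cyclic group of order q = p^t and E a nontrivial p'-subgroup of Aut(P) of order e, with a generator sending x to x^s. For 0 ≤ m ≤ q−1 let D_m be the derivation of kP determined by D_m(x) = Σ_{i=0}^{e−1} s^i x^{(m−1)s^{−i}+1} (exponents modulo q), and define D_m ∼ D_n if and only if n ≡ (m−1)s^{−i}+1 (mod q) for some 0 ≤ i ≤ e−1. Then ∼ is an equivalence relation, D_1 = 0, and the derivations D_m, as m runs over a set of representatives of the equivalence classes other than the singleton class of D_1, form a k-basis of the fixed-point space Der_k(kP)^E; in particular dim_k Der_k(kP)^E = (q−1)/e. -/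

import Mathlib

open MonoidAlgebra

namespace FixedDerivAux

variable {k : Type*} [CommRing k]

def twistDer {A : Type*} [CommRing A] [Algebra k A] (φ : A ≃ₐ[k] A)
    (D : Derivation k A A) : Derivation k A A where
  toLinearMap := φ.symm.toLinearMap ∘ₗ (D.toLinearMap ∘ₗ φ.toLinearMap)
  map_one_eq_zero' := by simp
  leibniz' a b := by
    show φ.symm (D (φ (a * b))) = a • φ.symm (D (φ b)) + b • φ.symm (D (φ a))
    rw [map_mul, Derivation.leibniz, map_add, smul_eq_mul, smul_eq_mul, smul_eq_mul,
      smul_eq_mul, map_mul, map_mul, AlgEquiv.symm_apply_apply, AlgEquiv.symm_apply_apply]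

@[simp] lemma twistDer_apply {A : Type*} [CommRing A] [Algebra k A] (φ : A ≃ₐ[k] A)
    (D : Derivation k A A) (a : A) : twistDer φ D a = φ.symm (D (φ a)) := rfl

def evalAt {A : Type*} [CommRing A] [Algebra k A] (x : A) : Derivation k A A →ₗ[k] A where
  toFun D := D x
  map_add' _ _ := rfl
  map_smul' _ _ := rfl

@[simp] lemma evalAt_apply {A : Type*} [CommRing A] [Algebra k A] (x : A)
    (D : Derivation k A A) : evalAt x D = D x := rfl

lemma ofAdd_one_pow {q : ℕ} (n : ℕ) :
    (Multiplicative.ofAdd (1 : ZMod q)) ^ n = Multiplicative.ofAdd ((n : ZMod q)) := by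
  induction n with
  | zero => simp
  | succ n ih => rw [pow_succ, ih, ← ofAdd_add]; push_cast; ring_nf

lemma of_eq_pow {q : ℕ} [NeZero q] (g : Multiplicative (ZMod q)) :
    MonoidAlgebra.of k (Multiplicative (ZMod q)) g =
      (MonoidAlgebra.of k (Multiplicative (ZMod q)) (Multiplicative.ofAdd (1 : ZMod q))) ^
        (Multiplicative.toAdd g).val := by
  rw [← map_pow, ofAdd_one_pow, ZMod.natCast_zmod_val]
  rfl

lemma derivation_ext {q : ℕ} [NeZero q]
    (D₁ D₂ : Derivation k (MonoidAlgebra k (Multiplicative (ZMod q)))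
      (MonoidAlgebra k (Multiplicative (ZMod q))))
    (h : D₁ (MonoidAlgebra.of k (Multiplicative (ZMod q)) (Multiplicative.ofAdd (1 : ZMod q))) =
      D₂ (MonoidAlgebra.of k (Multiplicative (ZMod q)) (Multiplicative.ofAdd (1 : ZMod q)))) :
    D₁ = D₂ := by
  have hof : ∀ g : Multiplicative (ZMod q),
      D₁ (MonoidAlgebra.of k (Multiplicative (ZMod q)) g) =
      D₂ (MonoidAlgebra.of k (Multiplicative (ZMod q)) g) := by
    intro g
    rw [of_eq_pow (k := k) g, Derivation.leibniz_pow, Derivation.leibniz_pow, h]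
  apply Derivation.ext
  intro a
  induction a using MonoidAlgebra.induction_linear with
  | zero => simp
  | add f g hf hg => rw [map_add, map_add, hf, hg]
  | single g c =>
      have hs : (MonoidAlgebra.single g c : MonoidAlgebra k (Multiplicative (ZMod q))) =
          c • MonoidAlgebra.of k (Multiplicative (ZMod q)) g := by
        rw [MonoidAlgebra.of_apply, MonoidAlgebra.smul_single', mul_one]
      rw [hs, Derivation.map_smul, Derivation.map_smul, hof]

lemma zero_divisor_cast {p t q : ℕ} (hp : p.Prime) (hq : q = p ^ t)
    [NeZero q] (hpq : p ∣ q) (a b : ZMod q) (ha : a ≠ 0) (hab : b * a = 0) :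
    ZMod.castHom hpq (ZMod p) b = 0 := by
  by_cases hb : b = 0
  · simp [hb]
  set B := b.val with hB
  set A := a.val with hA
  have hA0 : A ≠ 0 := fun h => ha ((ZMod.val_eq_zero a).mp h)
  have hB0 : B ≠ 0 := fun h => hb ((ZMod.val_eq_zero b).mp h)
  have hAlt : A < q := ZMod.val_lt a
  have hdvd : q ∣ B * A := by
    rw [← ZMod.natCast_eq_zero_iff, Nat.cast_mul, hB, hA,
      ZMod.natCast_zmod_val, ZMod.natCast_zmod_val]
    exact hab
  have ht' : t ≤ (B * A).factorization p :=
    (Nat.Prime.pow_dvd_iff_le_factorization hp (mul_ne_zero hB0 hA0)).mp (hq ▸ hdvd)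
  have hAf : A.factorization p < t := by
    by_contra hle
    push_neg at hle
    have h1 : p ^ t ∣ A := dvd_trans (pow_dvd_pow p hle) (Nat.ordProj_dvd A p)
    have h2 := Nat.le_of_dvd (Nat.pos_of_ne_zero hA0) h1
    omega
  have hBf : 1 ≤ B.factorization p := by
    rw [Nat.factorization_mul hB0 hA0, Finsupp.add_apply] at ht'
    omega
  have hpB : p ∣ B := hp.dvd_iff_one_le_factorization hB0 |>.mpr hBf
  have hbB : b = (B : ZMod q) := (ZMod.natCast_zmod_val b).symm
  rw [hbB, map_natCast, ZMod.natCast_eq_zero_iff]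
  exact hpB

lemma unit_eq_one {p t q : ℕ} (hp : p.Prime) (ht : 1 ≤ t) (hq : q = p ^ t) [NeZero q]
    (hpq : p ∣ q) (v : (ZMod q)ˣ) (hcp : (orderOf v).Coprime p)
    (h1 : ZMod.castHom hpq (ZMod p) (v : ZMod q) = 1) : v = 1 := by
  set V := (v : ZMod q).val with hV
  have hcast : ((V : ℕ) : ZMod p) = 1 := by
    rw [← h1]
    conv_rhs => rw [← ZMod.natCast_zmod_val (v : ZMod q)]
    rw [map_natCast]
  have hdvd : (p : ℤ) ∣ (V : ℤ) - 1 := by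
    rw [← ZMod.intCast_zmod_eq_zero_iff_dvd]
    push_cast
    rw [hcast]
    ring
  have h2 := dvd_sub_pow_of_dvd_sub hdvd (t - 1)
  rw [show t - 1 + 1 = t by omega] at h2
  have h3 : ((v : ZMod q)) ^ (p ^ (t - 1)) = 1 := by
    have h4 : (((V : ℤ) ^ (p ^ (t - 1)) - 1 ^ (p ^ (t - 1)) : ℤ) : ZMod q) = 0 := by
      rw [ZMod.intCast_zmod_eq_zero_iff_dvd, hq]
      exact_mod_cast h2
    push_cast at h4
    rw [ZMod.natCast_zmod_val] at h4
    linear_combination h4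
  have h4 : v ^ (p ^ (t - 1)) = 1 := by
    apply Units.ext
    rw [Units.val_pow_eq_pow_val, Units.val_one]
    exact h3
  have h5 : orderOf v ∣ p ^ (t - 1) := orderOf_dvd_of_pow_eq_one h4
  have h6 : orderOf v = 1 := (hcp.pow_right (t - 1)).eq_one_of_dvd h5
  exact orderOf_eq_one_iff.mp h6

end FixedDerivAux

open FixedDerivAux

set_option maxHeartbeats 3200000 in
/-- Let `P = ⟨x⟩` be cyclic of order `q = p ^ t` and `E` a nontrivial
`p'`-subgroup of `Aut(P)` of order `e`, with a generator `σ` sending `x` to `x ^ s`.  For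
`0 ≤ m ≤ q − 1` let `D_m` be the derivation of `kP` with
`D_m(x) = Σ_{i=0}^{e−1} sⁱ x^{(m−1)s^{−i}+1}` (exponents mod `q`), and declare `D_m ∼ D_n`
iff `n ≡ (m−1)s^{−i}+1 (mod q)` for some `0 ≤ i ≤ e−1`.  Then `∼` is an equivalence
relation, `D_1 = 0`, and the `D_m`, as `m` runs over representatives of the equivalence
classes other than the singleton class of `D_1`, form a `k`-basis of the fixed-point space
`Der_k(kP)^E`; in particular `dim_k Der_k(kP)^E = (q − 1)/e`.
(`P` is realised as `Multiplicative (ZMod q)`, `E`-fixedness is fixedness under the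
generator `σ`, acting on derivations by `D ↦ σ ∘ D ∘ σ⁻¹`.) -/
theorem fixed_derivations_basis_cyclic
    (p t q : ℕ) (hp : p.Prime) (ht : 1 ≤ t) (hq : q = p ^ t)
    (k : Type*) [Field k] [CharP k p] [IsAlgClosed k]
    (s : ℕ) (hcop : s.Coprime q)
    (e : ℕ) (he : orderOf (ZMod.unitOfCoprime s hcop) = e)
    (hent : 1 < e) (hep : e.Coprime p)
    (σ : MulAut (Multiplicative (ZMod q)))
    (hσ : ∀ a : ZMod q, σ (Multiplicative.ofAdd a) = Multiplicative.ofAdd ((s : ZMod q) * a))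
    (D : ZMod q → Derivation k (MonoidAlgebra k (Multiplicative (ZMod q)))
      (MonoidAlgebra k (Multiplicative (ZMod q))))
    (hD : ∀ m : ZMod q,
      D m (MonoidAlgebra.of k (Multiplicative (ZMod q)) (Multiplicative.ofAdd (1 : ZMod q))) =
        ∑ i ∈ Finset.range e,
          (s : k) ^ i •
            MonoidAlgebra.of k (Multiplicative (ZMod q))
              (Multiplicative.ofAdd
                ((m - 1) * (((ZMod.unitOfCoprime s hcop)⁻¹ : (ZMod q)ˣ) : ZMod q) ^ i + 1))) :
    Equivalence (fun m n : ZMod q =>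
        ∃ i < e, n = (m - 1) * (((ZMod.unitOfCoprime s hcop)⁻¹ : (ZMod q)ˣ) : ZMod q) ^ i + 1) ∧
    D 1 = 0 ∧
    ∀ R : Finset (ZMod q),
      (∀ n ∈ R, n ≠ 1) →
      (∀ m : ZMod q, m ≠ 1 → ∃! n, n ∈ R ∧
        ∃ i < e, n = (m - 1) * (((ZMod.unitOfCoprime s hcop)⁻¹ : (ZMod q)ˣ) : ZMod q) ^ i + 1) →
      (LinearIndependent k (fun n : R => D n) ∧
        (Submodule.span k (Set.range fun n : R => D n) : Set _) =
          {D' : Derivation k (MonoidAlgebra k (Multiplicative (ZMod q)))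
              (MonoidAlgebra k (Multiplicative (ZMod q))) |
            ∀ a, MonoidAlgebra.domCongr k k σ (D' ((MonoidAlgebra.domCongr k k σ).symm a))
              = D' a} ∧
        R.card = (q - 1) / e) := by
  classical
  have hq2 : 2 ≤ q := by
    rw [hq]
    calc 2 ≤ p := hp.two_le
    _ ≤ p ^ t := Nat.le_self_pow (by omega) p
  haveI : NeZero q := ⟨by omega⟩
  have hpq : p ∣ q := hq ▸ dvd_pow_self p (by omega : t ≠ 0)
  have he0 : 0 < e := by omega
  set u := ZMod.unitOfCoprime s hcop with hu_def
  set w := ((u⁻¹ : (ZMod q)ˣ) : ZMod q) with hw_def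
  set x := MonoidAlgebra.of k (Multiplicative (ZMod q)) (Multiplicative.ofAdd (1 : ZMod q))
    with hx_def
  set Φ := MonoidAlgebra.domCongr k k σ with hΦ_def
  have hu : (u : ZMod q) = s := ZMod.coe_unitOfCoprime s hcop
  have hsw : (s : ZMod q) * w = 1 := by rw [← hu, hw_def]; exact u.mul_inv
  have hws : w * (s : ZMod q) = 1 := by rw [mul_comm]; exact hsw
  have hwe : w ^ e = 1 := by
    rw [hw_def, ← Units.val_pow_eq_pow_val, inv_pow, ← he, pow_orderOf_eq_one, inv_one,
      Units.val_one]
  have hwmod : ∀ a : ℕ, w ^ a = w ^ (a % e) := by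
    intro a
    conv_lhs => rw [← Nat.div_add_mod a e]
    rw [pow_add, pow_mul, hwe, one_pow, one_mul]
  have hs1 : 1 ≤ s := by
    rcases Nat.eq_zero_or_pos s with h | h
    · exfalso; rw [h, Nat.coprime_zero_left] at hcop; omega
    · exact h
  have hske : (s : k) ^ e = 1 := by
    have h1 : (s : ZMod q) ^ e = 1 := by
      rw [← hu, ← Units.val_pow_eq_pow_val, ← he, pow_orderOf_eq_one, Units.val_one]
    have h2 : q ∣ s ^ e - 1 := by
      rw [← ZMod.natCast_eq_zero_iff, Nat.cast_sub (Nat.one_le_pow _ _ (by omega)),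
        Nat.cast_pow, h1, Nat.cast_one, sub_self]
    have h3 : p ∣ s ^ e - 1 := dvd_trans hpq h2
    have h4 : ((s ^ e - 1 : ℕ) : k) = 0 := (CharP.cast_eq_zero_iff k p _).mpr h3
    rw [Nat.cast_sub (Nat.one_le_pow _ _ (by omega)), Nat.cast_pow, Nat.cast_one,
      sub_eq_zero] at h4
    exact h4
  have hsk1 : (s : k) ≠ 1 := by
    intro hs
    have h1 : p ∣ s - 1 := by
      have h0 : ((s - 1 : ℕ) : k) = 0 := by
        rw [Nat.cast_sub hs1, hs, Nat.cast_one, sub_self]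
      exact (CharP.cast_eq_zero_iff k p _).mp h0
    have h2 : ZMod.castHom hpq (ZMod p) (u : ZMod q) = 1 := by
      rw [hu, map_natCast]
      have h5 : ((s - 1 : ℕ) : ZMod p) = 0 := (ZMod.natCast_eq_zero_iff _ _).mpr h1
      have h3 : ((s : ℕ) : ZMod p) = ((s - 1 : ℕ) : ZMod p) + 1 := by
        conv_lhs => rw [show s = (s - 1) + 1 by omega]
        rw [Nat.cast_add, Nat.cast_one]
      rw [h3, h5, zero_add]
    have h6 : (orderOf u).Coprime p := by rw [he]; exact hep
    have h4 : u = 1 := unit_eq_one hp ht hq hpq u h6 h2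
    rw [h4, orderOf_one] at he
    omega
  have hgeom : ∑ i ∈ Finset.range e, (s : k) ^ i = 0 := by
    rw [geom_sum_eq hsk1, hske, sub_self, zero_div]
  have hfree : ∀ a : ZMod q, a ≠ 0 → ∀ i, i < e → w ^ i * a = a → i = 0 := by
    intro a ha i hi hia
    have hv : (((u⁻¹ ^ i : (ZMod q)ˣ) : ZMod q)) = w ^ i := by
      rw [Units.val_pow_eq_pow_val, hw_def]
    have hz : (((u⁻¹ ^ i : (ZMod q)ˣ) : ZMod q) - 1) * a = 0 := by
      rw [hv, sub_mul, one_mul, hia, sub_self]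
    have hc := zero_divisor_cast hp hq hpq a _ ha hz
    rw [map_sub, map_one, sub_eq_zero] at hc
    have hcp : (orderOf (u⁻¹ ^ i : (ZMod q)ˣ)).Coprime p := by
      apply Nat.Coprime.coprime_dvd_left _ hep
      calc orderOf (u⁻¹ ^ i : (ZMod q)ˣ) ∣ orderOf (u⁻¹ : (ZMod q)ˣ) := orderOf_pow_dvd i
      _ = e := by rw [orderOf_inv, he]
    have h1 : (u⁻¹ ^ i : (ZMod q)ˣ) = 1 := unit_eq_one hp ht hq hpq _ hcp hc
    have h2 : e ∣ i := by
      have h3 := orderOf_dvd_of_pow_eq_one h1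
      rwa [orderOf_inv, he] at h3
    exact Nat.eq_zero_of_dvd_of_lt h2 hi
  -- Part 1 : equivalence
  have hrel : Equivalence (fun m n : ZMod q => ∃ i < e, n = (m - 1) * w ^ i + 1) := by
    constructor
    · intro m
      exact ⟨0, he0, by rw [pow_zero, mul_one, sub_add_cancel]⟩
    · rintro m n ⟨i, hi, rfl⟩
      refine ⟨(e - i) % e, Nat.mod_lt _ he0, ?_⟩
      rw [add_sub_cancel_right, ← hwmod (e - i), mul_assoc, ← pow_add,
        show i + (e - i) = e by omega, hwe, mul_one, sub_add_cancel]
    · rintro m n r ⟨i, hi, rfl⟩ ⟨j, hj, rfl⟩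
      refine ⟨(i + j) % e, Nat.mod_lt _ he0, ?_⟩
      rw [add_sub_cancel_right, ← hwmod (i + j), pow_add, ← mul_assoc]
  -- Part 2 : D 1 = 0
  have hD1 : D 1 = 0 := by
    apply derivation_ext
    rw [hD 1]
    have h1 : ∀ i ∈ Finset.range e, (s : k) ^ i •
        MonoidAlgebra.of k (Multiplicative (ZMod q))
          (Multiplicative.ofAdd (((1 : ZMod q) - 1) * w ^ i + 1)) = (s : k) ^ i • x := by
      intro i _
      rw [sub_self, zero_mul, zero_add]
    rw [Finset.sum_congr rfl h1, ← Finset.sum_smul, hgeom, zero_smul]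
    rfl
  refine ⟨hrel, hD1, ?_⟩
  intro R hR1 hRuniq
  -- coefficient computations
  have hcoeff : ∀ n b : ZMod q, (D n x).coeff (Multiplicative.ofAdd b) =
      ∑ i ∈ Finset.range e, (if (n - 1) * w ^ i + 1 = b then (s : k) ^ i else 0) := by
    intro n b
    rw [hD n, MonoidAlgebra.coeff_sum, Finsupp.finset_sum_apply]
    apply Finset.sum_congr rfl
    intro i _
    rw [MonoidAlgebra.coeff_smul, Finsupp.smul_apply, MonoidAlgebra.of_apply, MonoidAlgebra.coeff_single,
      Finsupp.single_apply, smul_eq_mul]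
    by_cases h : (n - 1) * w ^ i + 1 = b
    · rw [if_pos h, if_pos (by rw [h]), mul_one]
    · rw [if_neg, if_neg h, mul_zero]
      intro hc
      exact h (Multiplicative.ofAdd.injective hc)
  have hinj : ∀ n : ZMod q, n ≠ 1 → ∀ i, i < e → ∀ j, j < e →
      (n - 1) * w ^ i + 1 = (n - 1) * w ^ j + 1 → i = j := by
    intro n hn i hi j hj hij
    have h1 : (n - 1) * w ^ i = (n - 1) * w ^ j := by
      have h0 := hij
      exact add_right_cancel h0
    have h2 : w ^ ((i + (e - j)) % e) * (n - 1) = n - 1 := by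
      rw [← hwmod]
      calc w ^ (i + (e - j)) * (n - 1) = (n - 1) * w ^ i * w ^ (e - j) := by
            rw [pow_add]; ring
      _ = (n - 1) * w ^ j * w ^ (e - j) := by rw [h1]
      _ = n - 1 := by
            rw [mul_assoc, ← pow_add, show j + (e - j) = e by omega, hwe, mul_one]
    have h3 := hfree (n - 1) (sub_ne_zero.mpr hn) _ (Nat.mod_lt _ he0) h2
    have h4 : e ∣ i + (e - j) := Nat.dvd_of_mod_eq_zero h3
    obtain ⟨c, hc⟩ := h4
    have hc2 : c < 2 := by
      by_contra hcc
      push_neg at hcc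
      have h5 : e * 2 ≤ e * c := Nat.mul_le_mul_left e hcc
      omega
    interval_cases c <;> omega
  have horb1 : ∀ n : ZMod q, n ≠ 1 → ∀ i : ℕ, (n - 1) * w ^ i + 1 ≠ 1 := by
    intro n hn i h
    have h1 : (n - 1) * w ^ i = 0 := by
      have h0 := h
      rwa [add_eq_right] at h0
    have h2 : n - 1 = 0 := by
      calc n - 1 = (n - 1) * (w * (s : ZMod q)) ^ i := by rw [hws, one_pow, mul_one]
      _ = (n - 1) * w ^ i * (s : ZMod q) ^ i := by rw [mul_pow, mul_assoc]
      _ = 0 := by rw [h1, zero_mul]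
    exact hn (by rwa [sub_eq_zero] at h2)
  have hcoeff_eq : ∀ n : ZMod q, n ≠ 1 → ∀ j, j < e →
      (D n x).coeff (Multiplicative.ofAdd ((n - 1) * w ^ j + 1)) = (s : k) ^ j := by
    intro n hn j hj
    rw [hcoeff, Finset.sum_eq_single_of_mem j (Finset.mem_range.mpr hj)]
    · rw [if_pos rfl]
    · intro i hi hij
      rw [if_neg]
      intro h
      exact hij (hinj n hn i (Finset.mem_range.mp hi) j hj h)
  have hcoeff_ne : ∀ n b : ZMod q, (∀ i, i < e → (n - 1) * w ^ i + 1 ≠ b) →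
      (D n x).coeff (Multiplicative.ofAdd b) = 0 := by
    intro n b hb
    rw [hcoeff]
    apply Finset.sum_eq_zero
    intro i hi
    rw [if_neg (hb i (Finset.mem_range.mp hi))]
  -- linear independence
  have hLI : LinearIndependent k (fun n : R => D (n : ZMod q)) := by
    rw [linearIndependent_iff']
    intro S g hsum n hn
    have h1 : ∑ n' ∈ S, g n' • (D (n' : ZMod q) x) = 0 := by
      have h0 := congrArg (evalAt (k := k) x) hsum
      simpa [map_sum, map_smul] using h0
    have h2 : ∑ n' ∈ S, g n' * (D (n' : ZMod q) x).coeff (Multiplicative.ofAdd (n : ZMod q)) = 0 := by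
      have h0 := congrArg (fun z : MonoidAlgebra k (Multiplicative (ZMod q)) =>
        z.coeff (Multiplicative.ofAdd (n : ZMod q))) h1
      rw [MonoidAlgebra.coeff_sum, Finsupp.finset_sum_apply] at h0
      simpa [Finsupp.smul_apply, smul_eq_mul] using h0
    have hne1 : (n : ZMod q) ≠ 1 := hR1 n n.2
    rw [Finset.sum_eq_single_of_mem n hn] at h2
    · have h3 : (D (n : ZMod q) x).coeff (Multiplicative.ofAdd (n : ZMod q)) = 1 := by
        have h0 := hcoeff_eq (n : ZMod q) hne1 0 he0
        rwa [pow_zero, pow_zero, mul_one, sub_add_cancel] at h0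
      rwa [h3, mul_one] at h2
    · intro n' hn' hne
      have hne1' : (n' : ZMod q) ≠ 1 := hR1 n' n'.2
      have h0 : (D (n' : ZMod q) x).coeff (Multiplicative.ofAdd (n : ZMod q)) = 0 := by
        apply hcoeff_ne
        intro i hi hcontra
        obtain ⟨n₀, hn₀, huniq⟩ := hRuniq (n' : ZMod q) hne1'
        have e1 : (n : ZMod q) = n₀ := huniq _ ⟨n.2, i, hi, hcontra.symm⟩
        have e2 : (n' : ZMod q) = n₀ := huniq _ ⟨n'.2, hrel.refl _⟩
        exact hne (Subtype.ext (e2.trans e1.symm))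
      rw [h0, mul_zero]
  -- fixedness machinery
  have hσσ : ∀ g : Multiplicative (ZMod q), σ (σ⁻¹ g) = g := by
    intro g
    rw [MulAut.inv_def]
    exact σ.apply_symm_apply g
  have hσinv : ∀ a : ZMod q, σ⁻¹ (Multiplicative.ofAdd a) = Multiplicative.ofAdd (w * a) := by
    intro a
    have h1 : σ (Multiplicative.ofAdd (w * a)) = Multiplicative.ofAdd a := by
      rw [hσ, ← mul_assoc, hsw, one_mul]
    rw [← h1, MulAut.inv_def, MulEquiv.symm_apply_apply]
  have hΦof : ∀ g : Multiplicative (ZMod q),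
      Φ (MonoidAlgebra.of k (Multiplicative (ZMod q)) g) =
      MonoidAlgebra.of k (Multiplicative (ZMod q)) (σ g) := by
    intro g
    rw [MonoidAlgebra.of_apply, MonoidAlgebra.of_apply, hΦ_def]
    exact MonoidAlgebra.domCongr_single (R := k) (A := k) (σ : Multiplicative (ZMod q) ≃* _) g 1
  have hΦsymm_of : ∀ g : Multiplicative (ZMod q),
      Φ.symm (MonoidAlgebra.of k (Multiplicative (ZMod q)) g) =
      MonoidAlgebra.of k (Multiplicative (ZMod q)) (σ⁻¹ g) := by
    intro g
    apply Φ.injective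
    rw [Φ.apply_symm_apply, hΦof, hσσ]
  have hx_s : Φ x = x ^ s := by
    rw [hx_def, hΦof, hσ 1, mul_one, ← map_pow, ofAdd_one_pow]
  have hfix_iff : ∀ D' : Derivation k (MonoidAlgebra k (Multiplicative (ZMod q)))
      (MonoidAlgebra k (Multiplicative (ZMod q))),
      (∀ a, Φ (D' (Φ.symm a)) = D' a) ↔ Φ.symm (D' (Φ x)) = D' x := by
    intro D'
    constructor
    · intro h
      have h1 := h (Φ x)
      rw [Φ.symm_apply_apply] at h1
      rw [← h1, Φ.symm_apply_apply]
    · intro h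
      have hT : twistDer Φ D' = D' := by
        apply derivation_ext
        rw [twistDer_apply]
        exact h
      intro a
      have h2 := congrArg (fun Dd : Derivation k (MonoidAlgebra k (Multiplicative (ZMod q)))
        (MonoidAlgebra k (Multiplicative (ZMod q))) => Dd (Φ.symm a)) hT
      simp only [twistDer_apply] at h2
      rw [Φ.apply_symm_apply] at h2
      rw [← h2, Φ.apply_symm_apply]
  have hxs1 : x ^ (s - 1) = MonoidAlgebra.of k (Multiplicative (ZMod q))
      (Multiplicative.ofAdd ((s : ZMod q) - 1)) := by
    rw [hx_def, ← map_pow, ofAdd_one_pow]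
    congr 2
    rw [Nat.cast_sub hs1, Nat.cast_one]
  have hDpow : ∀ D' : Derivation k (MonoidAlgebra k (Multiplicative (ZMod q)))
      (MonoidAlgebra k (Multiplicative (ZMod q))),
      D' (Φ x) = (s : k) • (x ^ (s - 1) * D' x) := by
    intro D'
    rw [hx_s, Derivation.leibniz_pow, ← Nat.cast_smul_eq_nsmul k, smul_eq_mul]
  have hsymm_apply : ∀ (z : MonoidAlgebra k (Multiplicative (ZMod q)))
      (g : Multiplicative (ZMod q)), (Φ.symm z).coeff g = z.coeff (σ g) := by
    intro z g
    rw [hΦ_def, MonoidAlgebra.domCongr_symm, MonoidAlgebra.domCongr_apply, MulEquiv.symm_symm]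
  have hrec : ∀ D' : Derivation k (MonoidAlgebra k (Multiplicative (ZMod q)))
      (MonoidAlgebra k (Multiplicative (ZMod q))),
      (∀ a, Φ (D' (Φ.symm a)) = D' a) → ∀ b : ZMod q,
      (D' x).coeff (Multiplicative.ofAdd b) =
        (s : k) * (D' x).coeff (Multiplicative.ofAdd ((b - 1) * (s : ZMod q) + 1)) := by
    intro D' hfix b
    have h := (hfix_iff D').mp hfix
    rw [hDpow] at h
    have h2 := congrArg (fun z : MonoidAlgebra k (Multiplicative (ZMod q)) =>
      z.coeff (Multiplicative.ofAdd b)) h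
    rw [map_smul, MonoidAlgebra.coeff_smul, Finsupp.smul_apply, hsymm_apply, hσ, smul_eq_mul, hxs1,
      MonoidAlgebra.of_apply, MonoidAlgebra.single_mul_apply, one_mul, ← ofAdd_neg,
      ← ofAdd_add, show -((s : ZMod q) - 1) + (s : ZMod q) * b = (b - 1) * (s : ZMod q) + 1
        by ring] at h2
    exact h2.symm
  have hiter : ∀ D' : Derivation k (MonoidAlgebra k (Multiplicative (ZMod q)))
      (MonoidAlgebra k (Multiplicative (ZMod q))),
      (∀ a, Φ (D' (Φ.symm a)) = D' a) → ∀ (n : ZMod q) (i : ℕ),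
      (D' x).coeff (Multiplicative.ofAdd ((n - 1) * w ^ i + 1)) =
        (s : k) ^ i * (D' x).coeff (Multiplicative.ofAdd n) := by
    intro D' hfix n i
    induction i with
    | zero => rw [pow_zero, pow_zero, mul_one, sub_add_cancel, one_mul]
    | succ i ih =>
        rw [hrec D' hfix ((n - 1) * w ^ (i + 1) + 1)]
        have harg : ((n - 1) * w ^ (i + 1) + 1 - 1) * (s : ZMod q) + 1 =
            (n - 1) * w ^ i + 1 := by
          rw [add_sub_cancel_right, mul_assoc, pow_succ, mul_assoc]
          rw [hws, mul_one]
        rw [harg, ih, pow_succ]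
        ring
  have hone_coeff : ∀ D' : Derivation k (MonoidAlgebra k (Multiplicative (ZMod q)))
      (MonoidAlgebra k (Multiplicative (ZMod q))),
      (∀ a, Φ (D' (Φ.symm a)) = D' a) →
      (D' x).coeff (Multiplicative.ofAdd (1 : ZMod q)) = 0 := by
    intro D' hfix
    have h := hrec D' hfix 1
    rw [sub_self, zero_mul, zero_add] at h
    have h2 : ((s : k) - 1) * (D' x).coeff (Multiplicative.ofAdd (1 : ZMod q)) = 0 := by
      linear_combination -h
    rcases mul_eq_zero.mp h2 with h3 | h3
    · exact absurd (by linear_combination h3) hsk1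
    · exact h3
  -- every D n is fixed
  have hDfix : ∀ n : ZMod q, ∀ a, Φ ((D n) (Φ.symm a)) = (D n) a := by
    intro n
    rw [hfix_iff (D n), hDpow (D n), hD n]
    have hL : Φ.symm ((s : k) • (x ^ (s - 1) * ∑ i ∈ Finset.range e, (s : k) ^ i •
          MonoidAlgebra.of k (Multiplicative (ZMod q))
            (Multiplicative.ofAdd ((n - 1) * w ^ i + 1)))) =
        ∑ i ∈ Finset.range e, (s : k) ^ (i + 1) •
          MonoidAlgebra.of k (Multiplicative (ZMod q))
            (Multiplicative.ofAdd ((n - 1) * w ^ (i + 1) + 1)) := by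
      rw [Finset.mul_sum, map_smul, map_sum, Finset.smul_sum]
      apply Finset.sum_congr rfl
      intro i _
      rw [mul_smul_comm, map_smul, hxs1, ← map_mul, ← ofAdd_add, hΦsymm_of, hσinv,
        smul_smul, ← pow_succ']
      have harg : w * (((s : ZMod q) - 1) + ((n - 1) * w ^ i + 1)) =
          (n - 1) * w ^ (i + 1) + 1 := by
        rw [pow_succ]
        linear_combination hws
      rw [harg]
    rw [hL]
    have h1 := Finset.sum_range_succ' (fun j => (s : k) ^ j •
      MonoidAlgebra.of k (Multiplicative (ZMod q))
        (Multiplicative.ofAdd ((n - 1) * w ^ j + 1))) e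
    have h2 := Finset.sum_range_succ (fun j => (s : k) ^ j •
      MonoidAlgebra.of k (Multiplicative (ZMod q))
        (Multiplicative.ofAdd ((n - 1) * w ^ j + 1))) e
    have hFe : (s : k) ^ e • MonoidAlgebra.of k (Multiplicative (ZMod q))
          (Multiplicative.ofAdd ((n - 1) * w ^ e + 1)) =
        (s : k) ^ 0 • MonoidAlgebra.of k (Multiplicative (ZMod q))
          (Multiplicative.ofAdd ((n - 1) * w ^ 0 + 1)) := by
      rw [hwe, hske, pow_zero, pow_zero, one_smul]
    rw [hFe] at h2
    exact add_right_cancel (h1.symm.trans h2)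
  -- span equals the fixed-point set
  have hspan : (Submodule.span k (Set.range fun n : R => D (n : ZMod q)) : Set _) =
      {D' : Derivation k (MonoidAlgebra k (Multiplicative (ZMod q)))
          (MonoidAlgebra k (Multiplicative (ZMod q))) |
        ∀ a, Φ (D' (Φ.symm a)) = D' a} := by
    apply Set.eq_of_subset_of_subset
    · intro D' hD'
      simp only [SetLike.mem_coe] at hD'
      simp only [Set.mem_setOf_eq]
      induction hD' using Submodule.span_induction with
      | mem y hy =>
          obtain ⟨n, rfl⟩ := hy
          exact hDfix n
      | zero => intro a; simp
      | add y z hy hz hy' hz' =>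
          intro a
          rw [Derivation.add_apply, Derivation.add_apply, map_add, hy' a, hz' a]
      | smul c y hy hy' =>
          intro a
          rw [Derivation.smul_apply, Derivation.smul_apply, map_smul, hy' a]
    · intro D' hD'
      simp only [Set.mem_setOf_eq] at hD'
      have hrepr : D' = ∑ n ∈ R, ((D' x).coeff (Multiplicative.ofAdd n)) • D n := by
        apply derivation_ext
        have hsum : (∑ n ∈ R, ((D' x).coeff (Multiplicative.ofAdd n)) • D n) x =
            ∑ n ∈ R, ((D' x).coeff (Multiplicative.ofAdd n)) • (D n x) := by
          simp only [← evalAt_apply (k := k) x, map_sum, map_smul]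
        rw [hsum]
        have hpt : ∀ b : ZMod q, (D' x).coeff (Multiplicative.ofAdd b) =
            (∑ n ∈ R, ((D' x).coeff (Multiplicative.ofAdd n)) • (D n x)).coeff
              (Multiplicative.ofAdd b) := by
          intro b
          rw [MonoidAlgebra.coeff_sum, Finsupp.finset_sum_apply]
          by_cases hb : b = 1
          · subst hb
            rw [hone_coeff D' hD']
            symm
            apply Finset.sum_eq_zero
            intro n hn
            rw [MonoidAlgebra.coeff_smul, Finsupp.smul_apply, hcoeff_ne n 1 (fun i _ => horb1 n (hR1 n hn) i), smul_zero]
          · obtain ⟨n₀, ⟨hn₀R, i, hi, hn₀⟩, huniq⟩ := hRuniq b hb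
            obtain ⟨j, hj, hbj⟩ := hrel.symm ⟨i, hi, hn₀⟩
            rw [hbj, hiter D' hD' n₀ j]
            symm
            rw [Finset.sum_eq_single_of_mem n₀ hn₀R]
            · rw [MonoidAlgebra.coeff_smul, Finsupp.smul_apply, hcoeff_eq n₀ (hR1 n₀ hn₀R) j hj, smul_eq_mul, mul_comm]
            · intro n hn hne
              rw [MonoidAlgebra.coeff_smul, Finsupp.smul_apply]
              have h0 : (D n x).coeff (Multiplicative.ofAdd ((n₀ - 1) * w ^ j + 1)) = 0 := by
                apply hcoeff_ne
                intro l hl hcon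
                apply hne
                have hrelbn : ∃ i' < e, n = (b - 1) * w ^ i' + 1 :=
                  hrel.symm ⟨l, hl, by rw [hbj]; exact hcon.symm⟩
                exact huniq n ⟨hn, hrelbn⟩
              rw [h0, smul_zero]
        ext g
        have hg : g = Multiplicative.ofAdd (Multiplicative.toAdd g) := (ofAdd_toAdd g).symm
        rw [hg]
        exact hpt _
      rw [SetLike.mem_coe, hrepr]
      exact Submodule.sum_mem _ (fun n hn => Submodule.smul_mem _ _
        (Submodule.subset_span ⟨⟨n, hn⟩, rfl⟩))
  -- cardinality
  have hcard : R.card = (q - 1) / e := by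
    have hT : (Finset.univ.erase (1 : ZMod q)) =
        R.biUnion (fun n => (Finset.range e).image (fun i => (n - 1) * w ^ i + 1)) := by
      apply Finset.ext
      intro m
      simp only [Finset.mem_erase, Finset.mem_univ, and_true, Finset.mem_biUnion,
        Finset.mem_image, Finset.mem_range]
      constructor
      · intro hm
        obtain ⟨n₀, ⟨hn₀R, i, hi, hn₀⟩, _⟩ := hRuniq m hm
        obtain ⟨j, hj, hmj⟩ := hrel.symm ⟨i, hi, hn₀⟩
        exact ⟨n₀, hn₀R, j, hj, hmj.symm⟩
      · rintro ⟨n, hnR, i, hi, rfl⟩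
        exact horb1 n (hR1 n hnR) i
    have hdisj : ∀ n1 ∈ R, ∀ n2 ∈ R, n1 ≠ n2 →
        Disjoint ((Finset.range e).image (fun i => (n1 - 1) * w ^ i + 1))
          ((Finset.range e).image (fun i => (n2 - 1) * w ^ i + 1)) := by
      intro n1 h1 n2 h2 hne
      rw [Finset.disjoint_left]
      rintro m hm1 hm2
      rw [Finset.mem_image] at hm1 hm2
      obtain ⟨i, hi, rfl⟩ := hm1
      obtain ⟨j, hj, hji⟩ := hm2
      apply hne
      have hmne : (n1 - 1) * w ^ i + 1 ≠ 1 := horb1 n1 (hR1 n1 h1) i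
      obtain ⟨n₀, hn₀, huniq⟩ := hRuniq _ hmne
      have e1 : n1 = n₀ := huniq n1 ⟨h1, hrel.symm ⟨i, Finset.mem_range.mp hi, rfl⟩⟩
      have e2 : n2 = n₀ := huniq n2 ⟨h2, hrel.symm ⟨j, Finset.mem_range.mp hj, hji.symm⟩⟩
      rw [e1, e2]
    have himg : ∀ n ∈ R, ((Finset.range e).image (fun i => (n - 1) * w ^ i + 1)).card = e := by
      intro n hn
      rw [Finset.card_image_of_injOn, Finset.card_range]
      intro i hi j hj hij
      exact hinj n (hR1 n hn) i (Finset.mem_range.mp hi) j (Finset.mem_range.mp hj) hij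
    have hq1 : q - 1 = R.card * e := by
      have h1 : (Finset.univ.erase (1 : ZMod q)).card = q - 1 := by
        rw [Finset.card_erase_of_mem (Finset.mem_univ _), Finset.card_univ, ZMod.card]
      rw [← h1, hT, Finset.card_biUnion hdisj, Finset.sum_congr rfl himg, Finset.sum_const,
        smul_eq_mul]
    rw [hq1, Nat.mul_div_cancel _ he0]
  exact ⟨hLI, hspan, hcard⟩
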